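/- Let q be a power of 2, let l_0 and t be positive integers, m = l_0(2t+1), and δ = q^{l_0} + 1. Then there exist 2δ pairwise distinct elements u_1, …, u_{2δ} of U_{q^m+1} such that Σ_j u_j^i = 0 for all i = 0, 1, …, q^{l_0}. Concretely, if ξ ∈ U_{q^m+1} has order q^{l_0}+1 and α ∈ U_{q^m+1} is outside the subgroup generated by ξ, then the elements ξ^i and ξ^i·α for i = 1, …, q^{l_0}+1 satisfy these power-sum equations. -/
import Mathlib


/-- Characteristic 2: for `m = l₀(2t+1)` and `δ = q^{l₀} + 1`, there exist
`2δ` pairwise distinct elements of `U_{q^m+1} ⊆ F_{q^{2m}}^*` all of whose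
power sums of orders `0, 1, …, q^{l₀}` vanish. -/
theorem power_sums_vanish_char_two (s l₀ t : ℕ) (hs : 1 ≤ s) (hl₀ : 1 ≤ l₀)
    (ht : 1 ≤ t) (m : ℕ) (hm : m = l₀ * (2 * t + 1))
    (q : ℕ) (hq : q = 2 ^ s) (δ : ℕ) (hδ : δ = q ^ l₀ + 1)
    {K : Type*} [Field K] [Fintype K] (hcard : Fintype.card K = q ^ (2 * m)) :
    ∃ u : Fin (2 * δ) → K, Function.Injective u ∧
      (∀ j, (u j) ^ (q ^ m + 1) = 1) ∧
      (∀ i : ℕ, i ≤ q ^ l₀ → (∑ j, (u j) ^ i) = 0) := by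
  classical
  have hq1 : 1 < q := by
    subst hq
    calc 1 < 2 := one_lt_two
    _ ≤ 2 ^ s := Nat.le_self_pow (by omega) 2
  have hlm : l₀ < m := by nlinarith [hm]
  have hδpos : 0 < δ := by omega
  have hδlt : δ < q ^ m + 1 := by
    have := Nat.pow_lt_pow_right hq1 hlm
    omega
  -- char 2
  have h2 : (2 : K) = 0 := by
    obtain ⟨n, hp, hcard'⟩ := FiniteField.card K (ringChar K)
    have hp2 : ringChar K = 2 := by
      have heq : ringChar K ^ (n : ℕ) = 2 ^ (s * (2 * m)) := by
        rw [← hcard', hcard, hq, ← pow_mul]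
      have hd : ringChar K ∣ 2 ^ (s * (2 * m)) :=
        heq ▸ dvd_pow_self _ n.pos.ne'
      exact (Nat.prime_dvd_prime_iff_eq hp Nat.prime_two).1 (hp.dvd_of_dvd_pow hd)
    calc (2 : K) = ((ringChar K : ℕ) : K) := by rw [hp2]; norm_num
    _ = 0 := CharP.cast_eq_zero K _
  -- divisibilities
  have hdvd1 : δ ∣ q ^ m + 1 := by
    have : (q ^ l₀ + 1) ∣ (q ^ l₀) ^ (2 * t + 1) + 1 ^ (2 * t + 1) :=
      Odd.nat_add_dvd_pow_add_pow _ _ ⟨t, by ring⟩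
    simpa [hδ, ← pow_mul, hm] using this
  have hqm1 : 1 ≤ q ^ m := Nat.one_le_pow _ _ (by omega)
  have hfac : (q ^ m + 1) * (q ^ m - 1) = q ^ (2 * m) - 1 := by
    have h : q ^ (2 * m) = q ^ m * q ^ m := by rw [two_mul, pow_add]
    rw [h]
    obtain ⟨b, hb⟩ : ∃ b, q ^ m = b + 1 := ⟨q ^ m - 1, by omega⟩
    rw [hb]
    have hkey : (b + 1) * (b + 1) = (b + 1 + 1) * b + 1 := by ring
    have h2 : (b + 1 + 1) * (b + 1 - 1) = (b + 1 + 1) * b := by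
      rw [Nat.add_sub_cancel]
    omega
  set N := q ^ (2 * m) - 1 with hN
  have hdvd2 : q ^ m + 1 ∣ N := ⟨q ^ m - 1, hfac.symm⟩
  have hδN : δ ∣ N := hdvd1.trans hdvd2
  have hNcard : Fintype.card Kˣ = N := by
    rw [Fintype.card_units, hcard]
  have hN0 : 0 < N := by rw [← hNcard]; exact Fintype.card_pos
  -- generator
  obtain ⟨g, hg⟩ := IsCyclic.exists_generator (α := Kˣ)
  have hgord : orderOf g = N := by
    rw [orderOf_eq_card_of_forall_mem_zpowers hg, Nat.card_eq_fintype_card, hNcard]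
  have key : ∀ d : ℕ, 0 < d → d ∣ N → orderOf (g ^ (N / d)) = d := by
    intro d hd hdN
    rw [orderOf_pow, hgord, Nat.gcd_eq_right (Nat.div_dvd_of_dvd hdN),
      Nat.div_div_self hdN hN0.ne']
  set ξ : Kˣ := g ^ (N / δ) with hξ
  set α : Kˣ := g ^ (N / (q ^ m + 1)) with hα
  have hξord : orderOf ξ = δ := key δ hδpos hδN
  have hαord : orderOf α = q ^ m + 1 := key _ (by omega) hdvd2
  have hξδ : ξ ^ δ = 1 := by rw [← hξord]; exact pow_orderOf_eq_one ξ
  have hαU : α ^ (q ^ m + 1) = 1 := by rw [← hαord]; exact pow_orderOf_eq_one α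
  have hξU : ξ ^ (q ^ m + 1) = 1 := by
    obtain ⟨c, hc⟩ := hdvd1
    rw [hc, pow_mul, hξδ, one_pow]
  -- the elements
  set w : Fin (2 * δ) → Kˣ := fun j => α ^ ((j : ℕ) / δ) * ξ ^ ((j : ℕ) % δ) with hw
  refine ⟨fun j => (w j : K), ?_, ?_, ?_⟩
  · -- injectivity
    intro j j' hjj'
    have hww : w j = w j' := Units.ext hjj'
    have hja : (j : ℕ) / δ < 2 := Nat.div_lt_iff_lt_mul hδpos |>.2 (by
      have := j.2; omega)
    have hja' : (j' : ℕ) / δ < 2 := Nat.div_lt_iff_lt_mul hδpos |>.2 (by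
      have := j'.2; omega)
    have hmod : (j : ℕ) % δ < δ := Nat.mod_lt _ hδpos
    have hmod' : (j' : ℕ) % δ < δ := Nat.mod_lt _ hδpos
    have hξinj : ∀ b b' : ℕ, b < δ → b' < δ → ξ ^ b = ξ ^ b' → b = b' := by
      intro b b' hb hb' hbb
      exact pow_injOn_Iio_orderOf (by simpa [hξord] using hb)
        (by simpa [hξord] using hb') hbb
    have hαnot : ∀ b b' : ℕ, α * ξ ^ b = ξ ^ b' → False := by
      intro b b' hb
      have hαval : α = ξ ^ b' * (ξ ^ b)⁻¹ := eq_mul_inv_of_mul_eq hb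
      have hξpow : ∀ k : ℕ, (ξ ^ k) ^ δ = 1 := fun k => by
        rw [← pow_mul, mul_comm, pow_mul, hξδ, one_pow]
      have : α ^ δ = 1 := by
        rw [hαval, mul_pow, inv_pow, hξpow, hξpow, inv_one, mul_one]
      have hdvd : (q ^ m + 1) ∣ δ := hαord ▸ orderOf_dvd_of_pow_eq_one this
      exact absurd (Nat.le_of_dvd hδpos hdvd) (by omega)
    have heq : (j : ℕ) / δ = (j' : ℕ) / δ ∧ (j : ℕ) % δ = (j' : ℕ) % δ := by
      interval_cases h1 : (j : ℕ) / δ <;> interval_cases h2 : (j' : ℕ) / δ <;>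
        simp only [hw, h1, h2, pow_zero, pow_one, one_mul] at hww
      · exact ⟨rfl, hξinj _ _ hmod hmod' hww⟩
      · exact absurd hww.symm (fun h => hαnot _ _ h)
      · exact absurd hww (fun h => hαnot _ _ h)
      · exact ⟨rfl, hξinj _ _ hmod hmod' (mul_left_cancel hww)⟩
    obtain ⟨he1, he2⟩ := heq
    have h1 := Nat.div_add_mod (j : ℕ) δ
    have h2 := Nat.div_add_mod (j' : ℕ) δ
    rw [he1, he2] at h1
    exact Fin.ext (by omega)
  · -- in U
    intro j
    have hUU : ∀ a b : ℕ, (α ^ a * ξ ^ b) ^ (q ^ m + 1) = 1 := by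
      intro a b
      have e1 : (α ^ a) ^ (q ^ m + 1) = 1 := by
        rw [← pow_mul, mul_comm, pow_mul, hαU, one_pow]
      have e2 : (ξ ^ b) ^ (q ^ m + 1) = 1 := by
        rw [← pow_mul, mul_comm, pow_mul, hξU, one_pow]
      rw [mul_pow, e1, e2, mul_one]
    have : w j ^ (q ^ m + 1) = 1 := hUU _ _
    calc ((w j : K)) ^ (q ^ m + 1) = ((w j ^ (q ^ m + 1) : Kˣ) : K) := by push_cast; ring
    _ = 1 := by rw [this]; rfl
  · -- power sums
    intro i hi
    have hsum : ∑ j : Fin (2 * δ), ((w j : K)) ^ i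
        = ∑ j ∈ Finset.range (2 * δ), ((α : K) ^ (j / δ) * (ξ : K) ^ (j % δ)) ^ i := by
      rw [← Fin.sum_univ_eq_sum_range]
      refine Finset.sum_congr rfl fun j _ => ?_
      simp [hw]
    rw [hsum]
    have hsplit : ∑ j ∈ Finset.range (2 * δ), ((α : K) ^ (j / δ) * (ξ : K) ^ (j % δ)) ^ i
        = ∑ j ∈ Finset.range δ, ((ξ : K) ^ j) ^ i
          + ∑ j ∈ Finset.range δ, ((α : K) * (ξ : K) ^ j) ^ i := by
      rw [two_mul, Finset.sum_range_add]
      congr 1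
      · refine Finset.sum_congr rfl fun j hj => ?_
        rw [Finset.mem_range] at hj
        rw [Nat.div_eq_of_lt hj, Nat.mod_eq_of_lt hj, pow_zero, one_mul]
      · refine Finset.sum_congr rfl fun j hj => ?_
        rw [Finset.mem_range] at hj
        have h1 : (δ + j) / δ = 1 := by
          rw [add_comm, Nat.add_div_right _ hδpos, Nat.div_eq_of_lt hj]
        have h2 : (δ + j) % δ = j := by rw [Nat.add_mod_left, Nat.mod_eq_of_lt hj]
        rw [h1, h2, pow_one]
    rw [hsplit]
    rcases Nat.eq_zero_or_pos i with rfl | hi0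
    · simp only [pow_zero, Finset.sum_const, Finset.card_range, nsmul_eq_mul, mul_one]
      have : ((δ : K) + (δ : K)) = 0 := by
        have : ((δ : K) + (δ : K)) = 2 * (δ : K) := by ring
        rw [this, h2, zero_mul]
      simpa using this
    · have hxi : (ξ : K) ^ i ≠ 1 := by
        intro h
        have : ξ ^ i = 1 := Units.ext (by push_cast; simpa using h)
        have := hξord ▸ orderOf_dvd_of_pow_eq_one this
        have := Nat.le_of_dvd hi0 this
        omega
      have hgeo : ∑ j ∈ Finset.range δ, ((ξ : K) ^ i) ^ j = 0 := by
        rw [geom_sum_eq hxi]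
        have : ((ξ : K) ^ i) ^ δ = 1 := by
          rw [← pow_mul, mul_comm, pow_mul]
          have : (ξ : K) ^ δ = 1 := by
            simpa using congrArg Units.val hξδ
          rw [this, one_pow]
        rw [this, sub_self, zero_div]
      have e1 : ∑ j ∈ Finset.range δ, ((ξ : K) ^ j) ^ i
          = ∑ j ∈ Finset.range δ, ((ξ : K) ^ i) ^ j := by
        refine Finset.sum_congr rfl fun j _ => ?_
        rw [← pow_mul, ← pow_mul, mul_comm]
      have e2 : ∑ j ∈ Finset.range δ, ((α : K) * (ξ : K) ^ j) ^ i
          = (α : K) ^ i * ∑ j ∈ Finset.range δ, ((ξ : K) ^ i) ^ j := by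
        rw [Finset.mul_sum]
        refine Finset.sum_congr rfl fun j _ => ?_
        rw [mul_pow, ← pow_mul, ← pow_mul, mul_comm j i]
      rw [e1, e2, hgeo, mul_zero, add_zero]
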